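/- Let M be a finite MDP with alarm region and x_0 an initial state. For every history-dependent policy π̂ of the counting augmented MDP of M with initial state (x_0,0), there exists a history-dependent policy π of M with initial state x_0 such that the pushforward of the trajectory law P^π̂ under the projection ((x_0,y_0),…,(x_T,y_T), a_0,…,a_{T−1}) ↦ (x_0,…,x_T, a_0,…,a_{T−1}) equals the trajectory law P^π; in particular J_M(π) = Ĵ(π̂). -/

import Mathlib

/- Common framework: finite MDPs with alarm region, trajectories,
   history-dependent policies, trajectory laws, objectives. -/

attribute [local instance] Classical.propDecidable

noncomputable section

/-- A finite MDP with alarm region `Xa`, horizon `T ≥ 1`, transition pmf `P`,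
running rewards `r` and terminal reward `rT`. -/
structure MDP (X A : Type) [Fintype X] [Fintype A] where
  T : ℕ
  hT : 1 ≤ T
  P : X → A → X → ℝ
  P_nonneg : ∀ x a x', 0 ≤ P x a x'
  P_sum : ∀ x a, ∑ x', P x a x' = 1
  r : Fin T → X → A → ℝ
  rT : X → ℝ
  Xa : Set X

variable {X A : Type} [Fintype X] [Fintype A]

/-- A trajectory `(x₀,…,x_T, a₀,…,a_{T-1})`. -/
abbrev Traj (M : MDP X A) := (Fin (M.T + 1) → X) × (Fin M.T → A)

/-- A history-dependent randomized policy: at each time `t < T` it maps the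
history `(x₀,…,x_t, a₀,…,a_{t-1})` to a pmf on actions. -/
structure HistPolicy (M : MDP X A) where
  π : (t : Fin M.T) → (Fin (t.val + 1) → X) → (Fin t.val → A) → A → ℝ
  nonneg : ∀ t xs as a, 0 ≤ π t xs as a
  sum_one : ∀ t xs as, ∑ a, π t xs as a = 1

/-- A policy is Markov if at each time it depends only on the current state. -/
def IsMarkov {M : MDP X A} (p : HistPolicy M) : Prop :=
  ∀ (t : Fin M.T) (xs xs' : Fin (t.val + 1) → X) (as as' : Fin t.val → A),
    xs (Fin.last t.val) = xs' (Fin.last t.val) → p.π t xs as = p.π t xs' as'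

/-- The state part of the history at time `t` determined by a trajectory. -/
def histStates {M : MDP X A} (τ : Traj M) (t : Fin M.T) : Fin (t.val + 1) → X :=
  fun i => τ.1 (Fin.castLE (by have := t.isLt; omega) i)

/-- The action part of the history at time `t` determined by a trajectory. -/
def histActs {M : MDP X A} (τ : Traj M) (t : Fin M.T) : Fin t.val → A :=
  fun i => τ.2 (Fin.castLE (by have := t.isLt; omega) i)

/-- The probability mass of a trajectory under policy `p` with initial state `x0`. -/
def trajProb (M : MDP X A) (p : HistPolicy M) (x0 : X) (τ : Traj M) : ℝ :=
  (if τ.1 0 = x0 then (1 : ℝ) else 0) *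
    ∏ t : Fin M.T,
      p.π t (histStates τ t) (histActs τ t) (τ.2 t) *
        M.P (τ.1 t.castSucc) (τ.2 t) (τ.1 t.succ)

/-- Probability of an event (a set of trajectories) under the trajectory law. -/
def probEvent (M : MDP X A) (p : HistPolicy M) (x0 : X) (E : Traj M → Prop) : ℝ :=
  ∑ τ : Traj M, if E τ then trajProb M p x0 τ else 0

/-- The objective `J_M(π) = E[Σ_t r_t(X_t,A_t) + r_T(X_T)]`. -/
def J (M : MDP X A) (p : HistPolicy M) (x0 : X) : ℝ :=
  ∑ τ : Traj M, trajProb M p x0 τ *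
    (∑ t : Fin M.T, M.r t (τ.1 t.castSucc) (τ.2 t) + M.rT (τ.1 (Fin.last M.T)))

private lemma ite_nonneg'' {c : Prop} [Decidable c] {v : ℝ} (h : 0 ≤ v) :
    0 ≤ if c then v else 0 := by
  split
  · exact h
  · exact le_rfl
/-- The counting augmented MDP: the extra `Fin (T+1)` state records the number
of alarms triggered so far (saturating at `T`). -/
def countAug (M : MDP X A) : MDP (X × Fin (M.T + 1)) A where
  T := M.T
  hT := M.hT
  P := fun s a s' =>
    if s'.2 = (⟨min (s.2.val + (if s'.1 ∈ M.Xa then 1 else 0)) M.T,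
        by omega⟩ : Fin (M.T + 1)) then M.P s.1 a s'.1 else 0
  P_nonneg := fun s a s' => ite_nonneg'' (M.P_nonneg s.1 a s'.1)
  P_sum := by
    intro s a
    rw [Fintype.sum_prod_type]
    have h : ∀ x' : X,
        (∑ y : Fin (M.T + 1),
          if y = (⟨min (s.2.val + (if x' ∈ M.Xa then 1 else 0)) M.T,
              by omega⟩ : Fin (M.T + 1)) then M.P s.1 a x' else 0)
          = M.P s.1 a x' := by
      intro x'; simp
    rw [Finset.sum_congr rfl fun x' _ => h x']
    exact M.P_sum s.1 a
  r := fun t s a => M.r t s.1 a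
  rT := fun s => M.rT s.1
  Xa := {s | s.1 ∈ M.Xa}


namespace CountAugAux

variable (M : MDP X A)

/-- Extension of a state sequence to `ℕ` (clamping the index). -/
def ext (f : Fin (M.T + 1) → X) (n : ℕ) : X := f ⟨min n M.T, by omega⟩

/-- The deterministic alarm counter along a state sequence. -/
def cnt (f : ℕ → X) : ℕ → ℕ
  | 0 => 0
  | k + 1 => min (cnt f k + (if f (k + 1) ∈ M.Xa then 1 else 0)) M.T

lemma cnt_le (f : ℕ → X) : ∀ k, cnt M f k ≤ M.T
  | 0 => Nat.zero_le _
  | k + 1 => min_le_right _ _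

lemma cnt_congr {f g : ℕ → X} : ∀ k, (∀ j, j ≤ k → f j = g j) →
    cnt M f k = cnt M g k
  | 0, _ => rfl
  | k + 1, h => by
      simp only [cnt, cnt_congr k (fun j hj => h j (by omega)), h (k + 1) le_rfl]

/-- The counter as a `Fin`-valued function. -/
def cntF (f : Fin (M.T + 1) → X) (i : Fin (M.T + 1)) : Fin (M.T + 1) :=
  ⟨cnt M (ext M f) i.val, by have := cnt_le M (ext M f) i.val; omega⟩

/-- Lift a trajectory of `M` to a trajectory of `countAug M` via the counter. -/
def lift (τ : Traj M) : Traj (countAug M) :=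
  (fun i => (τ.1 i, cntF M τ.1 i), τ.2)

/-- Projection forgetting the counter. -/
def proj (σ : Traj (countAug M)) : Traj M := (fun t => (σ.1 t).1, σ.2)

lemma proj_lift (τ : Traj M) : proj M (lift M τ) = τ := rfl

/-- Extension of a history to `ℕ`. -/
def extH (t : Fin M.T) (xs : Fin (t.val + 1) → X) (n : ℕ) : X :=
  xs ⟨min n t.val, by omega⟩

/-- The imitating policy on `M`. -/
def liftPolicy (q : HistPolicy (countAug M)) : HistPolicy M where
  π t xs as a := q.π t (fun i => (xs i,
    ⟨cnt M (extH M t xs) i.val, by have := cnt_le M (extH M t xs) i.val; omega⟩)) as a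
  nonneg t xs as a := q.nonneg _ _ _ _
  sum_one t xs as := q.sum_one _ _ _

lemma trajProb_lift (q : HistPolicy (countAug M)) (x0 : X) (τ : Traj M) :
    trajProb (countAug M) q (x0, 0) (lift M τ) = trajProb M (liftPolicy M q) x0 τ := by
  unfold trajProb
  congr 1
  · -- initial indicators agree
    have : (lift M τ).1 0 = (x0, 0) ↔ τ.1 0 = x0 := by
      simp [lift, cntF, cnt, ext, Prod.ext_iff, Fin.ext_iff]
      exact Iff.rfl
    by_cases h : τ.1 0 = x0
    · rw [if_pos (this.mpr h), if_pos h]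
    · rw [if_neg (fun hc => h (this.mp hc)), if_neg h]
  · apply Finset.prod_congr rfl
    intro t _
    congr 1
    · -- policy factors agree
      show q.π t _ _ _ = q.π t _ _ _
      congr 1
      funext i
      show ((lift M τ).1 (Fin.castLE _ i)) = _
      apply Prod.ext
      · rfl
      · apply Fin.ext
        show cnt M (ext M τ.1) i.val = cnt M (extH M t (histStates τ t)) i.val
        apply cnt_congr
        intro j hj
        have hT : (t : ℕ) < M.T := t.isLt
        have hjt : j ≤ t.val := le_trans hj (by omega)
        show τ.1 ⟨min j M.T, _⟩ = τ.1 (Fin.castLE _ ⟨min j t.val, _⟩)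
        refine congrArg τ.1 (Fin.ext ?_)
        show min j M.T = min j t.val
        omega
    · -- transition factors agree
      show (countAug M).P ((lift M τ).1 t.castSucc) (τ.2 t) ((lift M τ).1 t.succ) = _
      show (if ((lift M τ).1 t.succ).2 = (⟨min ((((lift M τ).1 t.castSucc).2).val +
          (if ((lift M τ).1 t.succ).1 ∈ M.Xa then 1 else 0)) M.T, by omega⟩ : Fin (M.T + 1))
          then M.P (τ.1 t.castSucc) (τ.2 t) (τ.1 t.succ) else 0) = _
      rw [if_pos]
      · rfl
      apply Fin.ext
      show cnt M (ext M τ.1) (t.val + 1) = min (cnt M (ext M τ.1) t.val +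
        (if τ.1 t.succ ∈ M.Xa then 1 else 0)) M.T
      show min (cnt M (ext M τ.1) t.val + (if ext M τ.1 (t.val + 1) ∈ M.Xa then 1 else 0)) M.T = _
      have : ext M τ.1 (t.val + 1) = τ.1 t.succ := by
        show τ.1 ⟨min (t.val + 1) M.T, _⟩ = τ.1 t.succ
        refine congrArg τ.1 (Fin.ext ?_)
        show min (t.val + 1) M.T = t.val + 1
        have hT : (t : ℕ) < M.T := t.isLt
        omega
      rw [this]

lemma eq_lift_of_ne_zero (q : HistPolicy (countAug M)) (x0 : X) (σ : Traj (countAug M))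
    (h : trajProb (countAug M) q (x0, 0) σ ≠ 0) : σ = lift M (proj M σ) := by
  have h0 : σ.1 0 = (x0, 0) := by
    by_contra hc
    apply h
    unfold trajProb
    rw [if_neg hc, zero_mul]
  have hprod : ∀ t : Fin M.T,
      q.π t (histStates σ t) (histActs σ t) (σ.2 t) *
        (countAug M).P (σ.1 t.castSucc) (σ.2 t) (σ.1 t.succ) ≠ 0 := by
    intro t
    have h2 : (∏ t : Fin M.T, q.π t (histStates σ t) (histActs σ t) (σ.2 t) *
        (countAug M).P (σ.1 t.castSucc) (σ.2 t) (σ.1 t.succ)) ≠ 0 :=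
      right_ne_zero_of_mul h
    exact Finset.prod_ne_zero_iff.mp h2 t (Finset.mem_univ t)
  have hP : ∀ t : Fin M.T, (σ.1 t.succ).2 =
      (⟨min (((σ.1 t.castSucc).2).val + (if (σ.1 t.succ).1 ∈ M.Xa then 1 else 0)) M.T,
        by omega⟩ : Fin (M.T + 1)) := by
    intro t
    have h3 : (countAug M).P (σ.1 t.castSucc) (σ.2 t) (σ.1 t.succ) ≠ 0 :=
      right_ne_zero_of_mul (hprod t)
    by_contra hc
    apply h3
    show (if (σ.1 t.succ).2 = _ then M.P _ _ _ else 0) = 0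
    exact if_neg hc
  have key : ∀ n (hn : n < M.T + 1),
      ((σ.1 ⟨n, hn⟩).2 : ℕ) = cnt M (ext M (fun i => (σ.1 i).1)) n := by
    intro n
    induction n with
    | zero =>
        intro hn
        have : (⟨0, hn⟩ : Fin (M.T + 1)) = 0 := rfl
        exact congrArg (fun s : X × Fin (M.T + 1) => (s.2 : ℕ)) h0
    | succ k ih =>
        intro hn
        have hk : k < M.T := by omega
        have ht := hP ⟨k, hk⟩
        have hsucc : (⟨k, hk⟩ : Fin M.T).succ = ⟨k + 1, hn⟩ := rfl
        have hcast : (⟨k, hk⟩ : Fin M.T).castSucc = ⟨k, by omega⟩ := rfl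
        simp only [hsucc, hcast] at ht
        have hval := congrArg Fin.val ht
        simp only at hval
        refine hval.trans ?_
        refine (congrArg (fun n => min (n + _) M.T) (ih (by omega))).trans ?_
        show _ = min (cnt M (ext M (fun i => (σ.1 i).1)) k +
          (if ext M (fun i => (σ.1 i).1) (k + 1) ∈ M.Xa then 1 else 0)) M.T
        have hext : ext M (fun i => (σ.1 i).1) (k + 1) = (σ.1 ⟨k + 1, hn⟩).1 := by
          show (σ.1 ⟨min (k + 1) M.T, _⟩).1 = _
          refine congrArg (fun z => (σ.1 z).1) (Fin.ext ?_)
          show min (k + 1) M.T = k + 1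
          omega
        rw [hext]
        rfl
  apply Prod.ext
  · funext i
    apply Prod.ext
    · rfl
    · apply Fin.ext
      have := key i.val i.isLt
      exact this
  · rfl

end CountAugAux

/-- Any policy of the counting augmented MDP can be imitated
by a policy of the original MDP: the pushforward of the augmented trajectory
law under the projection forgetting the counter equals the original trajectory
law; in particular the objective values coincide. -/
theorem countAug_pushforward [Nonempty X] [Nonempty A]
    (M : MDP X A) (x0 : X) (q : HistPolicy (countAug M)) :
    ∃ p : HistPolicy M,
      (∀ τ : Traj M,
        trajProb M p x0 τ =
          ∑ σ : Traj (countAug M),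
            if ((fun t => (σ.1 t).1, σ.2) : Traj M) = τ
            then trajProb (countAug M) q (x0, 0) σ else 0) ∧
      J M p x0 = J (countAug M) q (x0, 0) := by
  open CountAugAux in
  have hpush : ∀ τ : Traj M,
      trajProb M (CountAugAux.liftPolicy M q) x0 τ =
        ∑ σ : Traj (countAug M),
          if ((fun t => (σ.1 t).1, σ.2) : Traj M) = τ
          then trajProb (countAug M) q (x0, 0) σ else 0 := by
    intro τ
    have hsum : ∀ σ : Traj (countAug M),
        (if ((fun t => (σ.1 t).1, σ.2) : Traj M) = τ
          then trajProb (countAug M) q (x0, 0) σ else 0)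
        = (if σ = CountAugAux.lift M τ then trajProb (countAug M) q (x0, 0) σ else 0) := by
      intro σ
      by_cases h1 : σ = CountAugAux.lift M τ
      · rw [if_pos h1, if_pos]
        show CountAugAux.proj M σ = τ
        rw [h1]
        exact CountAugAux.proj_lift M τ
      · rw [if_neg h1]
        by_cases h2 : ((fun t => (σ.1 t).1, σ.2) : Traj M) = τ
        · rw [if_pos h2]
          by_contra h3
          exact h1 ((CountAugAux.eq_lift_of_ne_zero M q x0 σ h3).trans
            (congrArg (CountAugAux.lift M) h2))
        · rw [if_neg h2]
    rw [Finset.sum_congr rfl fun σ _ => hsum σ]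
    simp only [Finset.sum_ite_eq', Finset.mem_univ, if_true]
    exact (CountAugAux.trajProb_lift M q x0 τ).symm
  refine ⟨CountAugAux.liftPolicy M q, hpush, ?_⟩
  show (∑ τ : Traj M, trajProb M (CountAugAux.liftPolicy M q) x0 τ *
      (∑ t : Fin M.T, M.r t (τ.1 t.castSucc) (τ.2 t) + M.rT (τ.1 (Fin.last M.T)))) = _
  have step : ∀ τ : Traj M, trajProb M (CountAugAux.liftPolicy M q) x0 τ *
      (∑ t : Fin M.T, M.r t (τ.1 t.castSucc) (τ.2 t) + M.rT (τ.1 (Fin.last M.T)))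
      = ∑ σ : Traj (countAug M), if ((fun t => (σ.1 t).1, σ.2) : Traj M) = τ then
          trajProb (countAug M) q (x0, 0) σ *
          (∑ t : Fin M.T, M.r t (τ.1 t.castSucc) (τ.2 t) + M.rT (τ.1 (Fin.last M.T))) else 0 := by
    intro τ
    rw [hpush τ, Finset.sum_mul]
    refine Finset.sum_congr rfl fun σ _ => ?_
    rw [ite_mul, zero_mul]
  rw [Finset.sum_congr rfl fun τ _ => step τ, Finset.sum_comm]
  refine Finset.sum_congr rfl fun σ _ => ?_
  simp only [Finset.sum_ite_eq, Finset.mem_univ, if_true]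
  rfl

end
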